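/- For every w ∈ R^N and every positive integer Δ, there exists a vector w̄ ∈ Z^N with ‖w̄‖_1 ≤ N^2·(2√N·Δ)^{N-1} such that w and w̄ are equivalent on the integer points of [-Δ, Δ]^N, i.e., for all integer vectors x, y with ‖x‖_∞, ‖y‖_∞ ≤ Δ: w^T x ≥ w^T y ⟺ w̄^T x ≥ w̄^T y. -/

import Mathlib

open Finset

local notation "⟪" x ", " y "⟫" => @inner ℝ _ _ x y


lemma hadamard_rows (n : ℕ) (A : Matrix (Fin n) (Fin n) ℝ) :
    |A.det| ≤ ∏ i, Real.sqrt (∑ j, (A i j)^2) := by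
  classical
  haveI : WellFoundedLT (Fin n) := Finite.to_wellFoundedLT
  set f : Fin n → EuclideanSpace ℝ (Fin n) := fun i => (WithLp.equiv 2 _).symm (A i) with hf
  set g := InnerProductSpace.gramSchmidt ℝ f with hg
  have horth : ∀ i j : Fin n, i ≠ j → ⟪g i, g j⟫ = 0 := fun i j h => InnerProductSpace.gramSchmidt_orthogonal ℝ f h
  set U : Matrix (Fin n) (Fin n) ℝ := fun i j => g i j with hU
  set L : Matrix (Fin n) (Fin n) ℝ := fun i j =>
    if j < i then ⟪g j, f i⟫ / (‖g j‖:ℝ)^2 else if j = i then 1 else 0 with hL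
  have hAU : A = L * U := by
    ext i k
    rw [Matrix.mul_apply]
    have h1 : A i k = f i k := rfl
    rw [h1]
    have h2 := InnerProductSpace.gramSchmidt_def'' ℝ f i
    simp only [RCLike.ofReal_real_eq_id, id_eq, ← hg] at h2
    rw [h2, PiLp.add_apply]
    have hsplit : (univ : Finset (Fin n)) = insert i (Iio i ∪ Ioi i) := by
      ext j
      simp only [mem_univ, mem_insert, mem_union, mem_Iio, mem_Ioi, true_iff]
      rcases lt_trichotomy j i with h|h|h
      · exact Or.inr (Or.inl h)
      · exact Or.inl h
      · exact Or.inr (Or.inr h)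
    rw [hsplit, Finset.sum_insert (by simp), Finset.sum_union (by
      simp only [Finset.disjoint_left, mem_Iio, mem_Ioi]
      intro a ha; exact not_lt_of_gt ha)]
    have hLi : L i i = 1 := by simp [hL]
    have hIoi : ∀ j ∈ Ioi i, L i j * U j k = 0 := by
      intro j hj
      have hij : i < j := mem_Ioi.1 hj
      have : L i j = 0 := by
        simp only [hL, if_neg (not_lt_of_gt hij), if_neg ((ne_of_lt hij).symm : ¬ j = i)]
      rw [this, zero_mul]
    rw [Finset.sum_eq_zero hIoi, hLi, one_mul, add_zero]
    have hpt : (∑ j ∈ Iio i, (⟪g j, f i⟫ / (‖g j‖:ℝ)^2) • g j) k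
        = ∑ j ∈ Iio i, (⟪g j, f i⟫ / (‖g j‖:ℝ)^2) * g j k :=
      by rw [WithLp.ofLp_sum, Finset.sum_apply]; rfl
    rw [hpt]
    have : ∀ j ∈ Iio i, ⟪g j, f i⟫ / (‖g j‖:ℝ)^2 * g j k = L i j * U j k := by
      intro j hj
      have hji : j < i := mem_Iio.1 hj
      simp only [hL, hU, if_pos hji]
    rw [Finset.sum_congr rfl this]
  have hdetL : L.det = 1 := by
    have htri : L.BlockTriangular OrderDual.toDual := by
      intro i j hij
      have h : i < j := hij
      simp only [hL, if_neg (not_lt_of_gt h), if_neg ((ne_of_lt h).symm : ¬ j = i)]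
    rw [Matrix.det_of_lowerTriangular L htri]
    have : ∀ i : Fin n, L i i = 1 := fun i => by simp [hL]
    simp [this]
  have hUUt : U * U.transpose = Matrix.diagonal (fun i => ‖g i‖^2) := by
    ext i j
    rw [Matrix.mul_apply]
    by_cases hij : i = j
    · subst hij
      simp only [Matrix.diagonal_apply_eq]
      rw [← real_inner_self_eq_norm_sq (g i), PiLp.inner_apply]
      simp [hU, Matrix.transpose, RCLike.inner_apply, conj_trivial, sq]
    · rw [Matrix.diagonal_apply_ne _ hij]
      have := horth i j hij
      rw [PiLp.inner_apply] at this
      simpa [hU, Matrix.transpose, RCLike.inner_apply, conj_trivial, mul_comm] using this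
  have hdetU2 : U.det ^ 2 = ∏ i, ‖g i‖^2 := by
    have h1 : U.det * U.transpose.det = (U * U.transpose).det := (Matrix.det_mul _ _).symm
    rw [Matrix.det_transpose] at h1
    rw [sq, h1, hUUt, Matrix.det_diagonal]
  have hnorm : ∀ i, ‖g i‖ ≤ ‖f i‖ := by
    intro i
    have h1 := InnerProductSpace.gramSchmidt_def'' ℝ f i
    simp only [RCLike.ofReal_real_eq_id, id_eq, ← hg] at h1
    set p := ∑ j ∈ Iio i, (⟪g j, f i⟫ / (‖g j‖:ℝ)^2) • g j with hp
    have horthp : ⟪g i, p⟫ = 0 := by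
      rw [hp, inner_sum]
      apply Finset.sum_eq_zero
      intro j hj
      rw [real_inner_smul_right, horth i j (ne_of_gt (mem_Iio.1 hj)), mul_zero]
    have hsq : ‖f i‖^2 = ‖g i‖^2 + ‖p‖^2 := by
      rw [h1, norm_add_sq_real, horthp]
      ring
    nlinarith [norm_nonneg (f i), norm_nonneg (g i), norm_nonneg p]
  have hdetA : |A.det| = |U.det| := by rw [hAU, Matrix.det_mul, hdetL, one_mul]
  rw [hdetA]
  have h2 : |U.det| = ∏ i, ‖g i‖ := by
    have hsq : |U.det|^2 = (∏ i, ‖g i‖)^2 := by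
      rw [sq_abs, hdetU2, ← Finset.prod_pow]
    have h3 : (0:ℝ) ≤ |U.det| := abs_nonneg _
    have h4 : (0:ℝ) ≤ ∏ i, ‖g i‖ := Finset.prod_nonneg (fun i _ => norm_nonneg _)
    nlinarith
  rw [h2]
  apply Finset.prod_le_prod (fun i _ => norm_nonneg _)
  intro i _
  calc ‖g i‖ ≤ ‖f i‖ := hnorm i
    _ = Real.sqrt (∑ j, (A i j)^2) := by
        rw [EuclideanSpace.norm_eq]
        congr 1
        apply Finset.sum_congr rfl
        intro j _
        rw [Real.norm_eq_abs, sq_abs]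
        rfl


lemma feasible_tight {N : ℕ} (D : Finset (EuclideanSpace ℝ (Fin N)))
    (w : EuclideanSpace ℝ (Fin N)) (hD : ∀ d ∈ D, (0:ℝ) ≤ ⟪d, w⟫) :
    ∃ v : EuclideanSpace ℝ (Fin N),
      (∀ d ∈ D, ⟪d, w⟫ = 0 → ⟪d, v⟫ = 0) ∧
      (∀ d ∈ D, 0 < ⟪d, w⟫ → 1 ≤ ⟪d, v⟫) ∧
      Submodule.span ℝ {d : EuclideanSpace ℝ (Fin N) | d ∈ D ∧ (⟪d, v⟫ = 0 ∨ ⟪d, v⟫ = 1)}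
        = Submodule.span ℝ (D : Set (EuclideanSpace ℝ (Fin N))) := by
  classical
  have aux : ∀ k : ℕ, ∀ v : EuclideanSpace ℝ (Fin N),
      ((∀ d ∈ D, ⟪d, w⟫ = 0 → ⟪d, v⟫ = 0) ∧ (∀ d ∈ D, 0 < ⟪d, w⟫ → 1 ≤ ⟪d, v⟫)) →
      (D.filter (fun d => ¬(⟪d, v⟫ = 0 ∨ ⟪d, v⟫ = 1))).card ≤ k →
      ∃ v' : EuclideanSpace ℝ (Fin N), (∀ d ∈ D, ⟪d, w⟫ = 0 → ⟪d, v'⟫ = 0) ∧ (∀ d ∈ D, 0 < ⟪d, w⟫ → 1 ≤ ⟪d, v'⟫) ∧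
        Submodule.span ℝ {d : EuclideanSpace ℝ (Fin N) | d ∈ D ∧ (⟪d, v'⟫ = 0 ∨ ⟪d, v'⟫ = 1)}
          = Submodule.span ℝ (D : Set (EuclideanSpace ℝ (Fin N))) := by
    intro k
    induction k with
    | zero =>
      intro v hfeas hcard
      refine ⟨v, hfeas.1, hfeas.2, ?_⟩
      have hfil : D.filter (fun d => ¬(⟪d, v⟫ = 0 ∨ ⟪d, v⟫ = 1)) = ∅ :=
        Finset.card_eq_zero.1 (Nat.le_zero.1 hcard)
      congr 1
      ext d
      simp only [Set.mem_setOf_eq, Finset.coe_mem, Finset.mem_coe]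
      constructor
      · exact fun h => h.1
      · intro hd
        refine ⟨hd, ?_⟩
        by_contra hnt
        have : d ∈ D.filter (fun d => ¬(⟪d, v⟫ = 0 ∨ ⟪d, v⟫ = 1)) := Finset.mem_filter.2 ⟨hd, hnt⟩
        rw [hfil] at this
        exact absurd this (Finset.notMem_empty d)
    | succ k ih =>
      intro v hfeas hcard
      by_cases hspan : Submodule.span ℝ {d : EuclideanSpace ℝ (Fin N) | d ∈ D ∧ (⟪d, v⟫ = 0 ∨ ⟪d, v⟫ = 1)}
          = Submodule.span ℝ (D : Set (EuclideanSpace ℝ (Fin N)))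
      · exact ⟨v, hfeas.1, hfeas.2, hspan⟩
      -- find d₀ ∈ D not in span of tight set
      set T : Set (EuclideanSpace ℝ (Fin N)) := {d : EuclideanSpace ℝ (Fin N) | d ∈ D ∧ (⟪d, v⟫ = 0 ∨ ⟪d, v⟫ = 1)} with hT
      set K : Submodule ℝ (EuclideanSpace ℝ (Fin N)) := Submodule.span ℝ T with hK
      have hd₀ : ∃ d₀ ∈ D, d₀ ∉ K := by
        by_contra h
        push_neg at h
        apply hspan
        apply le_antisymm
        · exact Submodule.span_mono (fun d hd => hd.1)
        · rw [Submodule.span_le]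
          exact fun d hd => h d hd
      obtain ⟨d₀, hd₀D, hd₀K⟩ := hd₀
      set u : EuclideanSpace ℝ (Fin N) := -(d₀ - (K.orthogonalProjectionOnto d₀ : EuclideanSpace ℝ (Fin N))) with hu
      have humem : -u ∈ Kᗮ := by
        rw [hu, neg_neg]
        exact Submodule.sub_starProjection_mem_orthogonal (K := K) d₀
      have hu0 : ∀ t ∈ T, ⟪t, u⟫ = 0 := by
        intro t ht
        have := (Submodule.mem_orthogonal K (-u)).1 humem t (Submodule.subset_span ht)
        rw [inner_neg_right] at this
        linarith
      have hune : u ≠ 0 := by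
        intro h
        apply hd₀K
        have : d₀ = (K.orthogonalProjectionOnto d₀ : EuclideanSpace ℝ (Fin N)) := by
          have := congrArg Neg.neg h
          rw [hu, neg_neg, neg_zero, sub_eq_zero] at this
          exact this
        rw [this]
        exact Submodule.coe_mem _
      have hud₀ : ⟪d₀, u⟫ < 0 := by
        have hsplit : d₀ = ((K.orthogonalProjectionOnto d₀ : EuclideanSpace ℝ (Fin N))) + (-u) := by
          rw [hu, neg_neg]; abel
        have h2 : ⟪(K.orthogonalProjectionOnto d₀ : EuclideanSpace ℝ (Fin N)), u⟫ = 0 := by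
          have := (Submodule.mem_orthogonal K (-u)).1 humem _ (Submodule.coe_mem ((K.orthogonalProjectionOnto) d₀))
          rw [inner_neg_right] at this
          linarith
        have h3 : ⟪d₀, u⟫ = -(‖u‖^2) := by
          conv_lhs => rw [hsplit]
          rw [inner_add_left, h2, inner_neg_left, real_inner_self_eq_norm_sq]
          ring
        have h4 : 0 < ‖u‖ := norm_pos_iff.mpr hune
        rw [h3]
        nlinarith
      have hd₀T : d₀ ∉ T := fun h => by
        have := hu0 d₀ h; linarith
      set T₀ : Finset (EuclideanSpace ℝ (Fin N)) := D.filter (fun d => d ∉ T ∧ ⟪d, u⟫ < 0) with hT₀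
      have hT₀ne : T₀.Nonempty := ⟨d₀, Finset.mem_filter.2 ⟨hd₀D, hd₀T, hud₀⟩⟩
      have hgt1 : ∀ d ∈ T₀, 1 < ⟪d, v⟫ := by
        intro d hd
        obtain ⟨hdD, hdnT, _⟩ := Finset.mem_filter.1 hd
        have hw0 : 0 < ⟪d, w⟫ := by
          rcases lt_or_eq_of_le (hD d hdD) with h|h
          · exact h
          · exfalso; exact hdnT ⟨hdD, Or.inl (hfeas.1 d hdD h.symm)⟩
        have h1 : 1 ≤ ⟪d, v⟫ := hfeas.2 d hdD hw0
        rcases lt_or_eq_of_le h1 with h|h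
        · exact h
        · exfalso; exact hdnT ⟨hdD, Or.inr h.symm⟩
      set ts : ℝ := T₀.inf' hT₀ne (fun d => (⟪d, v⟫ - 1) / (-⟪d, u⟫)) with hts
      have htspos : 0 < ts := by
        rw [hts, Finset.lt_inf'_iff]
        intro d hd
        have h1 := hgt1 d hd
        have h2 := (Finset.mem_filter.1 hd).2.2
        apply div_pos <;> linarith
      set v' : EuclideanSpace ℝ (Fin N) := v + ts • u with hv'
      have hinner : ∀ d : EuclideanSpace ℝ (Fin N), ⟪d, v'⟫ = ⟪d, v⟫ + ts * ⟪d, u⟫ := by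
        intro d
        rw [hv', inner_add_right, real_inner_smul_right]
      have htight_pres : ∀ d ∈ T, ⟪d, v'⟫ = ⟪d, v⟫ := by
        intro d hd
        rw [hinner, hu0 d hd, mul_zero, add_zero]
      have hfeas1' : ∀ d ∈ D, ⟪d, w⟫ = 0 → ⟪d, v'⟫ = 0 := by
        intro d hdD hw0
        have h0 : ⟪d, v⟫ = 0 := hfeas.1 d hdD hw0
        rw [htight_pres d ⟨hdD, Or.inl h0⟩, h0]
      have hfeas2' : ∀ d ∈ D, 0 < ⟪d, w⟫ → 1 ≤ ⟪d, v'⟫ := by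
        intro d hdD hw0
        have h1 : 1 ≤ ⟪d, v⟫ := hfeas.2 d hdD hw0
        by_cases hdT : d ∈ T
        · rw [htight_pres d hdT]; exact h1
        by_cases hdu : 0 ≤ ⟪d, u⟫
        · rw [hinner]
          nlinarith [htspos]
        · push_neg at hdu
          have hdT₀ : d ∈ T₀ := Finset.mem_filter.2 ⟨hdD, hdT, hdu⟩
          have hle : ts ≤ (⟪d, v⟫ - 1) / (-⟪d, u⟫) := Finset.inf'_le _ hdT₀
          rw [le_div_iff₀ (by linarith)] at hle
          rw [hinner]
          nlinarith
      -- the minimizer becomes tight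
      obtain ⟨dm, hdmT₀, hdm⟩ := Finset.exists_mem_eq_inf' hT₀ne (fun d => (⟪d, v⟫ - 1) / (-⟪d, u⟫))
      have hdmD : dm ∈ D := (Finset.mem_filter.1 hdmT₀).1
      have hdmnT : dm ∉ T := (Finset.mem_filter.1 hdmT₀).2.1
      have hdmu : ⟪dm, u⟫ < 0 := (Finset.mem_filter.1 hdmT₀).2.2
      have hdmtight : ⟪dm, v'⟫ = 1 := by
        have hne : ⟪dm, u⟫ ≠ 0 := ne_of_lt hdmu
        have halg : ∀ a b : ℝ, b ≠ 0 → a + (a - 1) / -b * b = 1 := by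
          intro a b hb
          rw [div_neg, neg_mul, div_mul_cancel₀ _ hb]
          ring
        rw [hinner, hts, hdm]
        exact halg _ _ hne
      have hsubset : D.filter (fun d => ¬(⟪d, v'⟫ = 0 ∨ ⟪d, v'⟫ = 1)) ⊂
          D.filter (fun d => ¬(⟪d, v⟫ = 0 ∨ ⟪d, v⟫ = 1)) := by
        constructor
        · intro d hd
          obtain ⟨hdD, hdnt⟩ := Finset.mem_filter.1 hd
          refine Finset.mem_filter.2 ⟨hdD, ?_⟩
          intro htv
          exact hdnt (by rw [htight_pres d ⟨hdD, htv⟩]; exact htv)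
        · intro hsub
          have h1 : dm ∈ D.filter (fun d => ¬(⟪d, v⟫ = 0 ∨ ⟪d, v⟫ = 1)) := by
            refine Finset.mem_filter.2 ⟨hdmD, ?_⟩
            intro h; exact hdmnT ⟨hdmD, h⟩
          have h2 := hsub h1
          have := (Finset.mem_filter.1 h2).2
          exact this (Or.inr hdmtight)
      apply ih v' ⟨hfeas1', hfeas2'⟩
      have := Finset.card_lt_card hsubset
      omega
  -- base point
  set lam : ℝ := 1 + ∑ d ∈ D.filter (fun d => 0 < ⟪d, w⟫), (⟪d, w⟫)⁻¹ with hlam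
  have hsum_nonneg : 0 ≤ ∑ d ∈ D.filter (fun d => 0 < ⟪d, w⟫), (⟪d, w⟫)⁻¹ :=
    Finset.sum_nonneg (fun d hd => le_of_lt (inv_pos.2 (Finset.mem_filter.1 hd).2))
  have hfeas0 : (∀ d ∈ D, ⟪d, w⟫ = 0 → ⟪d, lam • w⟫ = 0) ∧
      (∀ d ∈ D, 0 < ⟪d, w⟫ → 1 ≤ ⟪d, lam • w⟫) := by
    constructor
    · intro d hdD h0
      rw [real_inner_smul_right, h0, mul_zero]
    · intro d hdD hpos
      rw [real_inner_smul_right]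
      have hterm : (⟪d, w⟫)⁻¹ ≤ lam := by
        rw [hlam]
        have hle : (⟪d, w⟫)⁻¹ ≤ ∑ d' ∈ D.filter (fun d' => 0 < ⟪d', w⟫), (⟪d', w⟫)⁻¹ :=
          Finset.single_le_sum (f := fun d' => (⟪d', w⟫)⁻¹) (fun d' hd' => le_of_lt (inv_pos.2 (Finset.mem_filter.1 hd').2))
            (Finset.mem_filter.2 ⟨hdD, hpos⟩)
        linarith
      calc (1:ℝ) = (⟪d, w⟫)⁻¹ * ⟪d, w⟫ := (inv_mul_cancel₀ (ne_of_gt hpos)).symm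
        _ ≤ lam * ⟪d, w⟫ := mul_le_mul_of_nonneg_right hterm (le_of_lt hpos)
  exact aux _ (lam • w) hfeas0 le_rfl


set_option maxHeartbeats 2000000 in
theorem coefficient_reduction' (N Δ : ℕ) (hΔ : 0 < Δ) (w : Fin N → ℝ)
    (hadamard_rows : ∀ (n : ℕ) (A : Matrix (Fin n) (Fin n) ℝ),
      |A.det| ≤ ∏ i, Real.sqrt (∑ j, (A i j)^2))
    (feasible_tight : ∀ {N : ℕ} (D : Finset (EuclideanSpace ℝ (Fin N)))
      (w : EuclideanSpace ℝ (Fin N)), (∀ d ∈ D, (0:ℝ) ≤ ⟪d, w⟫) →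
      ∃ v : EuclideanSpace ℝ (Fin N),
        (∀ d ∈ D, ⟪d, w⟫ = 0 → ⟪d, v⟫ = 0) ∧
        (∀ d ∈ D, 0 < ⟪d, w⟫ → 1 ≤ ⟪d, v⟫) ∧
        Submodule.span ℝ {d : EuclideanSpace ℝ (Fin N) | d ∈ D ∧ (⟪d, v⟫ = 0 ∨ ⟪d, v⟫ = 1)}
          = Submodule.span ℝ (D : Set (EuclideanSpace ℝ (Fin N)))) :
    ∃ wbar : Fin N → ℤ,
      (∑ i, |(wbar i : ℝ)|) ≤ (N : ℝ) ^ 2 * (2 * Real.sqrt N * Δ) ^ (N - 1) ∧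
      ∀ x y : Fin N → ℤ, (∀ i, |x i| ≤ (Δ : ℤ)) → (∀ i, |y i| ≤ (Δ : ℤ)) →
        ((∑ i, w i * (y i : ℝ)) ≤ (∑ i, w i * (x i : ℝ)) ↔
         (∑ i, (wbar i : ℝ) * (y i : ℝ)) ≤ (∑ i, (wbar i : ℝ) * (x i : ℝ))) := by
  classical
  rcases Nat.eq_zero_or_pos N with hN0 | hNpos
  · subst hN0
    refine ⟨0, by simp, fun x y _ _ => by simp⟩
  have hΔ2 : (1:ℤ) ≤ 2*(Δ:ℤ) := by omega
  -- setup
  set c : (Fin N → ℤ) → EuclideanSpace ℝ (Fin N) :=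
    fun d => (WithLp.equiv 2 _).symm (fun i => (d i : ℝ)) with hc
  set wE : EuclideanSpace ℝ (Fin N) := (WithLp.equiv 2 _).symm w with hwE
  have hinner_c : ∀ (d : Fin N → ℤ) (v : EuclideanSpace ℝ (Fin N)),
      ⟪c d, v⟫ = ∑ i, (d i : ℝ) * v i := by
    intro d v
    rw [PiLp.inner_apply]
    simp only [RCLike.inner_apply, conj_trivial]
    exact Finset.sum_congr rfl (fun x _ => mul_comm _ _)
  set Dint : Finset (Fin N → ℤ) := Finset.Icc (fun _ => -(2*(Δ:ℤ))) (fun _ => 2*(Δ:ℤ)) with hDint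
  have hmemD : ∀ d : Fin N → ℤ, (∀ i, |d i| ≤ 2*(Δ:ℤ)) ↔ d ∈ Dint := by
    intro d
    rw [hDint, Finset.mem_Icc]
    constructor
    · intro h
      constructor <;> (intro i; have := abs_le.1 (h i); first | exact this.1 | exact this.2)
    · rintro ⟨h1, h2⟩ i
      exact abs_le.2 ⟨h1 i, h2 i⟩
  set Dfin : Finset (EuclideanSpace ℝ (Fin N)) :=
    (Dint.filter (fun d => 0 ≤ ⟪c d, wE⟫)).image c with hDfin
  have hD : ∀ v ∈ Dfin, (0:ℝ) ≤ ⟪v, wE⟫ := by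
    intro v hv
    rcases Finset.mem_image.1 hv with ⟨d, hd, rfl⟩
    exact (Finset.mem_filter.1 hd).2
  obtain ⟨vs, hfe, hfp, hsp⟩ := feasible_tight Dfin wE hD
  set T : Set (EuclideanSpace ℝ (Fin N)) :=
    {d : EuclideanSpace ℝ (Fin N) | d ∈ Dfin ∧ (⟪d, vs⟫ = 0 ∨ ⟪d, vs⟫ = 1)} with hT
  have hTD : T ⊆ ↑Dfin := fun d hd => hd.1
  obtain ⟨b₀, hb₀T, hb₀span, hb₀li⟩ := exists_linearIndependent ℝ T
  replace hb₀li : LinearIndepOn ℝ id b₀ := hb₀li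
  set std : Set (EuclideanSpace ℝ (Fin N)) :=
    Set.range (fun i : Fin N => EuclideanSpace.single i (1:ℝ)) with hstd
  have hstdspan : Submodule.span ℝ std = ⊤ := by
    have h1 := (EuclideanSpace.basisFun (Fin N) ℝ).toBasis.span_eq
    have h2 : Set.range ((EuclideanSpace.basisFun (Fin N) ℝ).toBasis) = std := by
      rw [hstd]
      ext v
      simp [OrthonormalBasis.coe_toBasis, EuclideanSpace.basisFun_apply]
    rwa [h2] at h1
  have hsub : b₀ ⊆ b₀ ∪ std := Set.subset_union_left
  set bset := hb₀li.extend hsub with hbset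
  have hbsub : bset ⊆ b₀ ∪ std := hb₀li.extend_subset hsub
  have hbsup : b₀ ⊆ bset := hb₀li.subset_extend hsub
  have hbspan : Submodule.span ℝ bset = ⊤ := by
    rw [hb₀li.span_extend_eq_span hsub]
    exact top_unique (hstdspan ▸ Submodule.span_mono Set.subset_union_right)
  have hbli : LinearIndependent ℝ ((↑) : bset → EuclideanSpace ℝ (Fin N)) := hb₀li.linearIndepOn_extend hsub
  have hbfin : bset.Finite :=
    (((Dfin.finite_toSet.subset hTD).subset hb₀T).union (Set.finite_range _)).subset hbsub
  haveI := hbfin.fintype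
  set B : Module.Basis bset ℝ (EuclideanSpace ℝ (Fin N)) :=
    Module.Basis.mk hbli (by rw [Subtype.range_coe]; exact hbspan.ge) with hB
  have hcard : Fintype.card bset = N := by
    have h1 := Module.finrank_eq_card_basis B
    rw [finrank_euclideanSpace_fin] at h1
    exact h1.symm
  set ε : Fin N ≃ bset := Fintype.equivOfCardEq (by rw [Fintype.card_fin, hcard]) with hε
  have hrows : ∀ v : bset, ∃ z : Fin N → ℤ,
      (∀ j, (z j : ℝ) = (v : EuclideanSpace ℝ (Fin N)) j) ∧ (∀ j, |z j| ≤ 2*(Δ:ℤ)) := by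
    rintro ⟨v, hv⟩
    rcases hbsub hv with hvb | hvs
    · rcases Finset.mem_image.1 (hTD (hb₀T hvb)) with ⟨d, hd, rfl⟩
      exact ⟨d, fun j => rfl, (hmemD d).2 (Finset.mem_filter.1 hd).1⟩
    · rcases hvs with ⟨i, rfl⟩
      refine ⟨Pi.single i 1, ?_, ?_⟩
      · intro j
        simp only [Pi.single_apply, EuclideanSpace.single_apply]
        split <;> simp
      · intro j
        simp only [Pi.single_apply]
        split <;> simp <;> omega
  choose Z hZ1 hZ2 using hrows
  set A : Matrix (Fin N) (Fin N) ℝ :=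
    Matrix.of (fun k j => ((ε k : bset) : EuclideanSpace ℝ (Fin N)) j) with hA
  set Aℤ : Matrix (Fin N) (Fin N) ℤ := Matrix.of (fun k j => Z (ε k) j) with hAZdef
  have hAcast : A = Aℤ.map (fun z : ℤ => (z:ℝ)) := by
    ext k j
    exact (hZ1 (ε k) j).symm
  set βℤ : Fin N → ℤ :=
    fun k => if ⟪((ε k : bset) : EuclideanSpace ℝ (Fin N)), vs⟫ = (1:ℝ) then 1 else 0 with hβℤ
  set β : Fin N → ℝ := fun k => (βℤ k : ℝ) with hβ
  have hβ01 : ∀ k, β k = 0 ∨ β k = 1 := by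
    intro k
    simp only [hβ, hβℤ]
    by_cases h : ⟪((ε k : bset) : EuclideanSpace ℝ (Fin N)), vs⟫ = (1:ℝ)
    · right; rw [if_pos h]; norm_num
    · left; rw [if_neg h]; norm_num
  have hβval : ∀ k, ((ε k : bset) : EuclideanSpace ℝ (Fin N)) ∈ T →
      β k = ⟪((ε k : bset) : EuclideanSpace ℝ (Fin N)), vs⟫ := by
    intro k hk
    rcases hk.2 with h0 | h1
    · have hne : ¬ (⟪((ε k : bset) : EuclideanSpace ℝ (Fin N)), vs⟫ = (1:ℝ)) := by
        rw [h0]; norm_num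
      have hb : β k = 0 := by simp only [hβ, hβℤ]; rw [if_neg hne]; norm_num
      rw [hb, h0]
    · have hb : β k = 1 := by simp only [hβ, hβℤ]; rw [if_pos h1]; norm_num
      rw [hb, h1]
  -- invertibility
  have hli' : LinearIndependent ℝ (fun k : Fin N => A k) := by
    have h1 : LinearIndependent ℝ (fun v : bset => (v : EuclideanSpace ℝ (Fin N))) := hbli
    have h2 := h1.comp ε ε.injective
    have h3 := h2.map' (WithLp.linearEquiv 2 ℝ (Fin N → ℝ)).toLinearMap
      (LinearEquiv.ker _)
    exact h3
  have hAunit : IsUnit A := Matrix.linearIndependent_rows_iff_isUnit.mp hli'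
  have hdet : A.det ≠ 0 := by
    intro h
    rw [Matrix.isUnit_iff_isUnit_det, h] at hAunit
    simp at hAunit
  -- cramer
  set u₀ : Fin N → ℝ := Matrix.cramer A β with hu₀
  have hconstraint : ∀ k, (∑ j, A k j * u₀ j) = A.det * β k := by
    intro k
    have := congrFun (Matrix.mulVec_cramer A β) k
    simpa [Matrix.mulVec, dotProduct] using this
  set σℤ : ℤ := if Aℤ.det < 0 then -1 else 1 with hσ
  set wbarℤ : Fin N → ℤ := fun i => σℤ * Matrix.cramer Aℤ βℤ i with hwbar
  have hdetcast : ((Aℤ.det : ℤ) : ℝ) = A.det := by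
    rw [hAcast]
    exact RingHom.map_det (Int.castRingHom ℝ) Aℤ
  have hcramercast : ∀ i, ((Matrix.cramer Aℤ βℤ i : ℤ) : ℝ) = Matrix.cramer A β i := by
    intro i
    rw [Matrix.cramer_apply, Matrix.cramer_apply]
    have hmap : (Aℤ.updateCol i βℤ).map (Int.cast : ℤ → ℝ) = A.updateCol i β := by
      rw [Matrix.map_updateCol, ← hAcast]
      rfl
    rw [← hmap]
    exact RingHom.map_det (Int.castRingHom ℝ) _
  have hσdet : ((σℤ:ℤ):ℝ) * A.det = |A.det| := by
    rw [hσ]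
    rcases lt_trichotomy Aℤ.det 0 with h | h | h
    · rw [if_pos h]
      have : A.det < 0 := by rw [← hdetcast]; exact_mod_cast h
      rw [abs_of_neg this]
      push_cast
      ring
    · exfalso
      apply hdet
      rw [← hdetcast, h]
      simp
    · rw [if_neg (by omega)]
      have : 0 < A.det := by rw [← hdetcast]; exact_mod_cast h
      rw [abs_of_pos this]
      push_cast
      ring
  have hdetpos : 0 < |A.det| := abs_pos.2 hdet
  -- row constraints for wbar
  have hwbarcast : ∀ j, ((wbarℤ j : ℤ):ℝ) = (σℤ:ℝ) * u₀ j := by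
    intro j
    rw [hwbar]
    push_cast [hcramercast]
    rw [hu₀]
  have hrowc : ∀ k : Fin N, ⟪((ε k : bset) : EuclideanSpace ℝ (Fin N)), c wbarℤ⟫
      = |A.det| * β k := by
    intro k
    rw [real_inner_comm, hinner_c]
    have hAv : ∀ j, ((ε k : bset) : EuclideanSpace ℝ (Fin N)) j = A k j := fun j => rfl
    calc (∑ j, (wbarℤ j : ℝ) * ((ε k : bset) : EuclideanSpace ℝ (Fin N)) j)
        = ∑ j, (σℤ:ℝ) * (A k j * u₀ j) := by
          refine Finset.sum_congr rfl (fun j _ => ?_)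
          rw [hwbarcast, hAv]
          ring
      _ = (σℤ:ℝ) * ∑ j, A k j * u₀ j := by rw [Finset.mul_sum]
      _ = (σℤ:ℝ) * (A.det * β k) := by rw [hconstraint k]
      _ = |A.det| * β k := by rw [← hσdet]; ring
  -- linear functional agreement on span T
  have hrow2 : ∀ v ∈ b₀, ⟪v, c wbarℤ⟫ = |A.det| * ⟪v, vs⟫ := by
    intro v hv
    have hvb : v ∈ bset := hbsup hv
    have hvk : ((ε (ε.symm ⟨v, hvb⟩) : bset) : EuclideanSpace ℝ (Fin N)) = v := by simp
    have h1 := hrowc (ε.symm ⟨v, hvb⟩)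
    have h2 := hβval (ε.symm ⟨v, hvb⟩) (by rw [hvk]; exact hb₀T hv)
    rw [hvk] at h1 h2
    rw [h1, h2]
  have hFzero : ∀ z ∈ Submodule.span ℝ T, ⟪z, c wbarℤ⟫ = |A.det| * ⟪z, vs⟫ := by
    intro z hz
    rw [← hb₀span] at hz
    induction hz using Submodule.span_induction with
    | mem v hv => exact hrow2 v hv
    | zero => simp
    | add a b ha hb iha ihb => rw [inner_add_left, inner_add_left, iha, ihb]; ring
    | smul r a ha iha => rw [real_inner_smul_left, real_inner_smul_left, iha]; ring
  have hkey : ∀ d : Fin N → ℤ, (∀ i, |d i| ≤ 2*(Δ:ℤ)) → 0 ≤ ⟪c d, wE⟫ →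
      ⟪c d, c wbarℤ⟫ = |A.det| * ⟪c d, vs⟫ ∧ (c d) ∈ Dfin := by
    intro d hd hw0
    have hdD : c d ∈ Dfin := by
      rw [hDfin]
      exact Finset.mem_image_of_mem c (Finset.mem_filter.2 ⟨(hmemD d).1 hd, hw0⟩)
    refine ⟨?_, hdD⟩
    apply hFzero
    rw [hsp]
    exact Submodule.subset_span (Finset.mem_coe.2 hdD)
  have hneg : ∀ (d : Fin N → ℤ) (z : EuclideanSpace ℝ (Fin N)),
      ⟪c (fun i => -(d i)), z⟫ = -⟪c d, z⟫ := by
    intro d z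
    rw [hinner_c, hinner_c, ← Finset.sum_neg_distrib]
    refine Finset.sum_congr rfl (fun i _ => ?_)
    push_cast
    ring
  have hmain : ∀ d : Fin N → ℤ, (∀ i, |d i| ≤ 2*(Δ:ℤ)) → 0 ≤ ⟪c d, wE⟫ →
      0 ≤ ⟪c d, c wbarℤ⟫ ∧ (0 < ⟪c d, wE⟫ → 0 < ⟪c d, c wbarℤ⟫) := by
    intro d hd hw0
    obtain ⟨heq, hdD⟩ := hkey d hd hw0
    rcases eq_or_lt_of_le hw0 with h | h
    · have h0 : ⟪c d, vs⟫ = 0 := hfe (c d) hdD h.symm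
      rw [heq, h0, mul_zero]
      exact ⟨le_refl _, fun hc => absurd h.symm (ne_of_gt hc)⟩
    · have h1 : 1 ≤ ⟪c d, vs⟫ := hfp (c d) hdD h
      have h2 : 0 < ⟪c d, c wbarℤ⟫ := by
        rw [heq]
        exact mul_pos hdetpos (by linarith)
      exact ⟨le_of_lt h2, fun _ => h2⟩
  have hsign : ∀ d : Fin N → ℤ, (∀ i, |d i| ≤ 2*(Δ:ℤ)) →
      (0 ≤ ⟪c d, wE⟫ ↔ 0 ≤ ⟪c d, c wbarℤ⟫) := by
    intro d hd
    constructor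
    · intro h
      exact (hmain d hd h).1
    · intro h
      by_contra hcon
      push_neg at hcon
      have h2 : 0 < ⟪c (fun i => -(d i)), wE⟫ := by rw [hneg]; linarith
      have h3 := (hmain (fun i => -(d i)) (fun i => by simpa using hd i) (le_of_lt h2)).2 h2
      rw [hneg] at h3
      linarith
  -- construct
  refine ⟨wbarℤ, ?_, ?_⟩
  · -- bound
    have hσabs : |(σℤ:ℝ)| = 1 := by
      rw [hσ]; split <;> norm_num
    have hwabs : ∀ i, |(wbarℤ i : ℝ)| = |(A.updateCol i β).det| := by
      intro i
      calc |(wbarℤ i : ℝ)| = |(σℤ:ℝ) * u₀ i| := by rw [hwbarcast i]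
        _ = |(σℤ:ℝ)| * |u₀ i| := abs_mul _ _
        _ = |u₀ i| := by rw [hσabs, one_mul]
        _ = |(A.updateCol i β).det| := by rw [hu₀, Matrix.cramer_apply]
    have hcolbound : ∀ i : Fin N,
        |(A.updateCol i β).det| ≤ Real.sqrt N * (2 * Real.sqrt N * Δ)^(N-1) := by
      intro i
      set M := A.updateCol i β with hM
      have h2 := hadamard_rows N M.transpose
      rw [Matrix.det_transpose] at h2
      have hfac : ∀ j : Fin N, Real.sqrt (∑ k, (M.transpose j k)^2)
          ≤ (if j = i then Real.sqrt N else 2 * Real.sqrt N * Δ) := by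
        intro j
        by_cases hj : j = i
        · subst hj
          rw [if_pos rfl]
          have hent : ∀ k, (M.transpose j k)^2 ≤ 1 := by
            intro k
            have he : M.transpose j k = β k := by
              rw [Matrix.transpose_apply, hM, Matrix.updateCol_apply, if_pos rfl]
            rw [he]
            rcases hβ01 k with h | h <;> rw [h] <;> norm_num
          calc Real.sqrt (∑ k, (M.transpose j k)^2)
              ≤ Real.sqrt (∑ _k : Fin N, (1:ℝ)) :=
                Real.sqrt_le_sqrt (Finset.sum_le_sum (fun k _ => hent k))
            _ = Real.sqrt N := by rw [Finset.sum_const, Finset.card_univ, Fintype.card_fin]; simp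
        · rw [if_neg hj]
          have hent : ∀ k : Fin N, (M.transpose j k)^2 ≤ (2*(Δ:ℝ))^2 := by
            intro k
            have he : M.transpose j k = A k j := by
              rw [Matrix.transpose_apply, hM, Matrix.updateCol_apply, if_neg hj]
            rw [he]
            have h3 : |A k j| ≤ 2*(Δ:ℝ) := by
              have h4 : A k j = ((Z (ε k) j : ℤ) : ℝ) := (hZ1 (ε k) j).symm
              rw [h4, ← Int.cast_abs]
              have h5 := hZ2 (ε k) j
              calc ((|Z (ε k) j| : ℤ) : ℝ) ≤ ((2*(Δ:ℤ) : ℤ) : ℝ) := by exact_mod_cast h5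
                _ = 2*(Δ:ℝ) := by push_cast; ring
            nlinarith [abs_nonneg (A k j), le_abs_self (A k j), neg_abs_le (A k j)]
          calc Real.sqrt (∑ k, (M.transpose j k)^2)
              ≤ Real.sqrt (∑ _k : Fin N, (2*(Δ:ℝ))^2) :=
                Real.sqrt_le_sqrt (Finset.sum_le_sum (fun k _ => hent k))
            _ = Real.sqrt ((N:ℝ) * (2*(Δ:ℝ))^2) := by
                rw [Finset.sum_const, Finset.card_univ, Fintype.card_fin, nsmul_eq_mul]
            _ = Real.sqrt N * (2*(Δ:ℝ)) := by
                rw [Real.sqrt_mul (by positivity), Real.sqrt_sq (by positivity)]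
            _ = 2 * Real.sqrt N * Δ := by ring
      have hprod : (∏ j, (if j = i then Real.sqrt N else 2 * Real.sqrt N * Δ))
          = Real.sqrt N * (2 * Real.sqrt N * Δ)^(N-1) := by
        rw [← Finset.mul_prod_erase univ _ (Finset.mem_univ i), if_pos rfl]
        congr 1
        rw [Finset.prod_congr rfl (fun j hj => if_neg (Finset.mem_erase.1 hj).1),
          Finset.prod_const, Finset.card_erase_of_mem (Finset.mem_univ i),
          Finset.card_univ, Fintype.card_fin]
      calc |M.det| ≤ ∏ j, Real.sqrt (∑ k, (M.transpose j k)^2) := h2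
        _ ≤ ∏ j, (if j = i then Real.sqrt N else 2 * Real.sqrt N * Δ) :=
            Finset.prod_le_prod (fun j _ => Real.sqrt_nonneg _) (fun j _ => hfac j)
        _ = Real.sqrt N * (2 * Real.sqrt N * Δ)^(N-1) := hprod
    have hsqrtN : Real.sqrt N ≤ (N:ℝ) := by
      have h1 : (1:ℝ) ≤ N := by exact_mod_cast hNpos
      have h6 : Real.sqrt N ≤ Real.sqrt ((N:ℝ)^2) := Real.sqrt_le_sqrt (by nlinarith)
      rwa [Real.sqrt_sq (by positivity)] at h6
    have hXnn : (0:ℝ) ≤ (2 * Real.sqrt N * Δ)^(N-1) := by positivity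
    calc (∑ i, |(wbarℤ i:ℝ)|)
        ≤ ∑ _i : Fin N, Real.sqrt N * (2 * Real.sqrt N * Δ)^(N-1) :=
          Finset.sum_le_sum (fun i _ => by rw [hwabs i]; exact hcolbound i)
      _ = (N:ℝ) * (Real.sqrt N * (2 * Real.sqrt N * Δ)^(N-1)) := by
          rw [Finset.sum_const, Finset.card_univ, Fintype.card_fin, nsmul_eq_mul]
      _ ≤ (N:ℝ)^2 * (2 * Real.sqrt N * Δ)^(N-1) := by
          have hNnn : (0:ℝ) ≤ N := Nat.cast_nonneg N
          have h7 : Real.sqrt N * (2 * Real.sqrt N * (Δ:ℝ))^(N-1)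
              ≤ (N:ℝ) * (2 * Real.sqrt N * (Δ:ℝ))^(N-1) :=
            mul_le_mul_of_nonneg_right hsqrtN hXnn
          have h8 := mul_le_mul_of_nonneg_left h7 hNnn
          nlinarith [h8]
  · -- equivalence
    intro x y hx hy
    set d : Fin N → ℤ := fun i => x i - y i with hd
    have hdb : ∀ i, |d i| ≤ 2*(Δ:ℤ) := by
      intro i
      have htri : |x i - y i| ≤ |x i| + |y i| := by
        have := abs_add_le (x i) (-(y i))
        simpa [sub_eq_add_neg, abs_neg] using this
      have := hx i; have := hy i
      simp only [hd]
      omega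
    have h1 : ⟪c d, wE⟫ = (∑ i, w i * (x i:ℝ)) - (∑ i, w i * (y i:ℝ)) := by
      rw [hinner_c, ← Finset.sum_sub_distrib]
      refine Finset.sum_congr rfl (fun i _ => ?_)
      have hwi : wE i = w i := rfl
      rw [hwi]
      simp only [hd]
      push_cast
      ring
    have h2 : ⟪c d, c wbarℤ⟫ = (∑ i, (wbarℤ i:ℝ) * (x i:ℝ)) - (∑ i, (wbarℤ i:ℝ) * (y i:ℝ)) := by
      rw [hinner_c, ← Finset.sum_sub_distrib]
      refine Finset.sum_congr rfl (fun i _ => ?_)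
      have hwi : (c wbarℤ) i = (wbarℤ i : ℝ) := rfl
      rw [hwi]
      simp only [hd]
      push_cast
      ring
    have hiff := hsign d hdb
    rw [h1, h2] at hiff
    constructor
    · intro hle
      have := hiff.1 (by linarith)
      linarith
    · intro hle
      have := hiff.2 (by linarith)
      linarith

theorem coefficient_reduction (N Δ : ℕ) (hΔ : 0 < Δ) (w : Fin N → ℝ) :
    ∃ wbar : Fin N → ℤ,
      (∑ i, |(wbar i : ℝ)|) ≤ (N : ℝ) ^ 2 * (2 * Real.sqrt N * Δ) ^ (N - 1) ∧
      ∀ x y : Fin N → ℤ, (∀ i, |x i| ≤ (Δ : ℤ)) → (∀ i, |y i| ≤ (Δ : ℤ)) →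
        ((∑ i, w i * (y i : ℝ)) ≤ (∑ i, w i * (x i : ℝ)) ↔
         (∑ i, (wbar i : ℝ) * (y i : ℝ)) ≤ (∑ i, (wbar i : ℝ) * (x i : ℝ))) :=
  coefficient_reduction' N Δ hΔ w hadamard_rows (fun D w hD => feasible_tight D w hD)
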